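/- Let w_1, …, w_n be positive functions on [a,b] with w_k^{(n−k)} absolutely continuous, and define D_0 f = f, D_k f = ((1/w_k) D_{k−1} f)′ for k = 1, …, n. Let p be integrable on [a,b], x ∈ [a,b], and define r_x^0 = p, r_x^k = r_x(w_k r_x^{k−1}). Then for f sufficiently smooth, ∫_a^b p(t) f(t) dt − Σ_{k=0}^{n−1} (∫_a^b r_x^k(t) w_{k+1}(t) dt) · D_k f(x)/w_{k+1}(x) = ∫_a^b r_x^n(t) D_n f(t) dt. -/

import Mathlib

open MeasureTheory intervalIntegral

/-- Fubini on a triangle for interval integrals. -/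
lemma triangle_fubini (q g : ℝ → ℝ) (a c : ℝ) (hac : a ≤ c)
    (hq : IntervalIntegrable q volume a c) (hg : IntervalIntegrable g volume a c) :
    (∫ t in a..c, q t * (∫ s in t..c, g s)) = ∫ s in a..c, (∫ t in a..s, q t) * g s := by
  set μ := volume.restrict (Set.Ioc a c) with hμ
  have hqI : Integrable q μ := (intervalIntegrable_iff_integrableOn_Ioc_of_le hac).1 hq
  have hgI : Integrable g μ := (intervalIntegrable_iff_integrableOn_Ioc_of_le hac).1 hg
  have hmeas : MeasurableSet {p : ℝ × ℝ | p.1 < p.2} :=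
    measurableSet_lt measurable_fst measurable_snd
  set F : ℝ × ℝ → ℝ := Set.indicator {p : ℝ × ℝ | p.1 < p.2} (fun z : ℝ × ℝ => q z.1 * g z.2)
    with hF
  have hFint : Integrable F (μ.prod μ) := (hqI.mul_prod hgI).indicator hmeas
  have swap : (∫ t, ∫ s, F (t, s) ∂μ ∂μ) = ∫ s, ∫ t, F (t, s) ∂μ ∂μ :=
    integral_integral_swap (f := fun t s => F (t, s)) hFint
  have L : ∀ t ∈ Set.Ioc a c, (∫ s, F (t, s) ∂μ) = q t * ∫ s in t..c, g s := by
    intro t ht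
    have h1 : ∀ s, F (t, s) = Set.indicator (Set.Ioi t) (fun s => q t * g s) s := by
      intro s
      by_cases h : t < s <;> simp [hF, Set.indicator, h]
    calc (∫ s, F (t, s) ∂μ) = ∫ s in Set.Ioc a c, Set.indicator (Set.Ioi t) (fun s => q t * g s) s := by
          rw [hμ]; exact integral_congr_ae (Filter.Eventually.of_forall fun s => h1 s)
      _ = ∫ s in Set.Ioc a c ∩ Set.Ioi t, q t * g s := setIntegral_indicator measurableSet_Ioi
      _ = ∫ s in Set.Ioc t c, q t * g s := by
          rw [Set.Ioc_inter_Ioi, sup_eq_right.mpr ht.1.le]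
      _ = q t * ∫ s in t..c, g s := by
          rw [integral_of_le ht.2, MeasureTheory.integral_const_mul]
  have R : ∀ s ∈ Set.Ioc a c, (∫ t, F (t, s) ∂μ) = (∫ t in a..s, q t) * g s := by
    intro s hs
    have h1 : ∀ t, F (t, s) = Set.indicator (Set.Iio s) (fun t => q t * g s) t := by
      intro t
      by_cases h : t < s <;> simp [hF, Set.indicator, h]
    calc (∫ t, F (t, s) ∂μ) = ∫ t in Set.Ioc a c, Set.indicator (Set.Iio s) (fun t => q t * g s) t := by
          rw [hμ]; exact integral_congr_ae (Filter.Eventually.of_forall fun t => h1 t)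
      _ = ∫ t in Set.Ioc a c ∩ Set.Iio s, q t * g s := setIntegral_indicator measurableSet_Iio
      _ = ∫ t in Set.Ioo a s, q t * g s := by
          have hset : Set.Ioc a c ∩ Set.Iio s = Set.Ioo a s := by
            ext y
            simp only [Set.mem_inter_iff, Set.mem_Ioc, Set.mem_Iio, Set.mem_Ioo]
            constructor
            · rintro ⟨⟨h1', _⟩, h3⟩; exact ⟨h1', h3⟩
            · rintro ⟨h1', h2⟩; exact ⟨⟨h1', h2.le.trans hs.2⟩, h2⟩
          rw [hset]
      _ = (∫ t in a..s, q t) * g s := by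
          rw [integral_of_le hs.1.le, integral_Ioc_eq_integral_Ioo,
            MeasureTheory.integral_mul_const]
  rw [integral_of_le hac, integral_of_le hac]
  calc (∫ t in Set.Ioc a c, q t * ∫ s in t..c, g s)
      = ∫ t, ∫ s, F (t, s) ∂μ ∂μ := (setIntegral_congr_fun measurableSet_Ioc L).symm
    _ = ∫ s, ∫ t, F (t, s) ∂μ ∂μ := swap
    _ = ∫ s in Set.Ioc a c, (∫ t in a..s, q t) * g s := setIntegral_congr_fun measurableSet_Ioc R

/-- The weighted kernels `r_x^k`: `r_x^0 = p` and
`r_x^{k+1}(s) = −∫_a^s w_{k+1} r_x^k` for `s ≤ x`, `∫_s^b w_{k+1} r_x^k` for `s ≥ x`. -/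
noncomputable def rkw (a b x : ℝ) (w : ℕ → ℝ → ℝ) (p : ℝ → ℝ) : ℕ → ℝ → ℝ
  | 0 => p
  | k + 1 => fun s =>
      if s ≤ x then -(∫ t in a..s, w (k + 1) t * rkw a b x w p k t)
      else ∫ t in s..b, w (k + 1) t * rkw a b x w p k t

lemma rkw_succ_apply (a b x : ℝ) (w : ℕ → ℝ → ℝ) (p : ℝ → ℝ) (k : ℕ) (s : ℝ) :
    rkw a b x w p (k + 1) s =
      if s ≤ x then -(∫ t in a..s, w (k + 1) t * rkw a b x w p k t)
      else ∫ t in s..b, w (k + 1) t * rkw a b x w p k t := rfl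

/-- Integral representation with a general differential operator
`D₀f = f`, `D_k f = ((1/w_k) D_{k−1} f)'`:
`∫ p f − Σ_{k<n} (∫ r_x^k w_{k+1}) · D_k f(x)/w_{k+1}(x) = ∫ r_x^n · D_n f`.
The weights `w_k` are positive with `w_k^{(n−k)}` absolutely continuous; the operators
`D_k f` are encoded by `Df k` via the fundamental theorem of calculus. -/
theorem stmt4 (a b : ℝ) (hab : a < b) (n : ℕ) (hn : 1 ≤ n)
    (w : ℕ → ℝ → ℝ)
    (hwpos : ∀ k, 1 ≤ k → k ≤ n → ∀ t ∈ Set.Icc a b, 0 < w k t)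
    (hwsm : ∀ k, 1 ≤ k → k ≤ n →
      ContDiffOn ℝ (n - k) (w k) (Set.Icc a b) ∧
      ∃ wd : ℝ → ℝ, IntervalIntegrable wd volume a b ∧
        ∀ y ∈ Set.Icc a b,
          iteratedDerivWithin (n - k) (w k) (Set.Icc a b) y
            = iteratedDerivWithin (n - k) (w k) (Set.Icc a b) a + ∫ t in a..y, wd t)
    (p : ℝ → ℝ) (hp : IntervalIntegrable p volume a b)
    (x : ℝ) (hx : x ∈ Set.Icc a b)
    (f : ℝ → ℝ) (Df : ℕ → ℝ → ℝ) (hD0 : Df 0 = f)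
    (hint : ∀ k < n, IntervalIntegrable (Df (k + 1)) volume a b)
    (hFTC : ∀ k < n, ∀ y ∈ Set.Icc a b,
      Df k y / w (k + 1) y = Df k a / w (k + 1) a + ∫ t in a..y, Df (k + 1) t) :
    (∫ t in a..b, p t * f t)
        - ∑ k ∈ Finset.range n,
            (∫ t in a..b, rkw a b x w p k t * w (k + 1) t) * (Df k x / w (k + 1) x)
      = ∫ t in a..b, rkw a b x w p n t * Df n t := by
  obtain ⟨hax, hxb⟩ := hx
  have hIcc : Set.uIcc a b = Set.Icc a b := Set.uIcc_of_le hab.le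
  have hwcont : ∀ k < n, ContinuousOn (w (k + 1)) (Set.Icc a b) := fun k hk =>
    ((hwsm (k + 1) (Nat.succ_le_succ (Nat.zero_le _)) hk).1).continuousOn
  have hwne : ∀ k < n, ∀ t ∈ Set.Icc a b, w (k + 1) t ≠ 0 := fun k hk t ht =>
    (hwpos (k + 1) (Nat.succ_le_succ (Nat.zero_le _)) hk t ht).ne'
  have hsubax : Set.uIcc a x ⊆ Set.uIcc a b := by
    rw [hIcc, Set.uIcc_of_le hax]; exact Set.Icc_subset_Icc le_rfl hxb
  have hsubxb : Set.uIcc x b ⊆ Set.uIcc a b := by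
    rw [hIcc, Set.uIcc_of_le hxb]; exact Set.Icc_subset_Icc hax le_rfl
  have hsubas : ∀ s ∈ Set.Icc a b, Set.uIcc a s ⊆ Set.uIcc a b := by
    intro s hs
    rw [hIcc, Set.uIcc_of_le hs.1]; exact Set.Icc_subset_Icc le_rfl hs.2
  -- integrability of the products w_{k+1} * r^k
  have hqint : ∀ k < n, IntervalIntegrable (rkw a b x w p k) volume a b →
      IntervalIntegrable (fun t => w (k + 1) t * rkw a b x w p k t) volume a b := by
    intro k hk hr
    exact hr.continuousOn_mul (hIcc ▸ hwcont k hk)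
  -- integrability of the kernels r^k
  have hrint : ∀ k ≤ n, IntervalIntegrable (rkw a b x w p k) volume a b := by
    intro k
    induction k with
    | zero => exact fun _ => hp
    | succ k ih =>
      intro hk1
      have hk : k < n := hk1
      have hqk := hqint k hk (ih hk.le)
      have hPc : ContinuousOn (fun s => ∫ t in a..s, w (k + 1) t * rkw a b x w p k t)
          (Set.Icc a b) := by
        have h := continuousOn_primitive_interval' hqk Set.left_mem_uIcc
        rwa [hIcc] at h
      have hleft : IntervalIntegrable (rkw a b x w p (k + 1)) volume a x := by
        have hcont : ContinuousOn
            (fun s => -(∫ t in a..s, w (k + 1) t * rkw a b x w p k t)) (Set.uIcc a x) :=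
          (hPc.mono (hIcc ▸ hsubax)).neg
        apply hcont.intervalIntegrable.congr_ae
        filter_upwards [ae_restrict_mem measurableSet_uIoc] with s hs
        rw [Set.uIoc_of_le hax] at hs
        rw [rkw_succ_apply, if_pos hs.2]
      have hright : IntervalIntegrable (rkw a b x w p (k + 1)) volume x b := by
        have hcont : ContinuousOn
            (fun s => (∫ t in a..b, w (k + 1) t * rkw a b x w p k t)
              - ∫ t in a..s, w (k + 1) t * rkw a b x w p k t) (Set.uIcc x b) :=
          continuousOn_const.sub (hPc.mono (hIcc ▸ hsubxb))
        apply hcont.intervalIntegrable.congr_ae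
        filter_upwards [ae_restrict_mem measurableSet_uIoc] with s hs
        rw [Set.uIoc_of_le hxb] at hs
        rw [rkw_succ_apply, if_neg (not_le.mpr hs.1)]
        exact integral_interval_sub_left hqk
          (hqk.mono_set (hsubas s ⟨hax.trans hs.1.le, hs.2⟩))
      exact hleft.trans hright
  -- the key integration-by-parts step
  have key : ∀ k < n,
      (∫ t in a..b, rkw a b x w p k t * Df k t)
        = (∫ t in a..b, w (k + 1) t * rkw a b x w p k t) * (Df k x / w (k + 1) x)
          + ∫ t in a..b, rkw a b x w p (k + 1) t * Df (k + 1) t := by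
    intro k hk
    have hqk : IntervalIntegrable (fun t => w (k + 1) t * rkw a b x w p k t) volume a b :=
      hqint k hk (hrint k hk.le)
    have hgint : IntervalIntegrable (Df (k + 1)) volume a b := hint k hk
    have hGcont : ContinuousOn (fun t => ∫ s in x..t, Df (k + 1) s) (Set.Icc a b) := by
      have h := continuousOn_primitive_interval' hgint (by rw [hIcc]; exact ⟨hax, hxb⟩)
      rwa [hIcc] at h
    have hPc : ContinuousOn (fun s => ∫ t in a..s, w (k + 1) t * rkw a b x w p k t)
        (Set.Icc a b) := by
      have h := continuousOn_primitive_interval' hqk Set.left_mem_uIcc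
      rwa [hIcc] at h
    -- Step 1: pointwise rewriting of the integrand on [a,b]
    have hstep1 : (∫ t in a..b, rkw a b x w p k t * Df k t)
        = ∫ t in a..b, ((w (k + 1) t * rkw a b x w p k t) * (Df k x / w (k + 1) x)
            + (w (k + 1) t * rkw a b x w p k t) * (∫ s in x..t, Df (k + 1) s)) := by
      apply integral_congr
      intro t ht
      dsimp only
      rw [hIcc] at ht
      have hWt : w (k + 1) t ≠ 0 := hwne k hk t ht
      have hB : Df k t / w (k + 1) t = Df k x / w (k + 1) x + ∫ s in x..t, Df (k + 1) s := by
        have h1 := hFTC k hk t ht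
        have h2 := hFTC k hk x ⟨hax, hxb⟩
        have h3 : (∫ s in a..t, Df (k + 1) s) - ∫ s in a..x, Df (k + 1) s
            = ∫ s in x..t, Df (k + 1) s :=
          integral_interval_sub_left (hgint.mono_set (hsubas t ht)) (hgint.mono_set hsubax)
        linarith
      have hA : rkw a b x w p k t * Df k t
          = (w (k + 1) t * rkw a b x w p k t) * (Df k t / w (k + 1) t) := by
        field_simp
      rw [hA, hB, mul_add]
    -- Step 2: split off the constant term
    have hwqG : IntervalIntegrable
        (fun t => (w (k + 1) t * rkw a b x w p k t) * (∫ s in x..t, Df (k + 1) s))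
        volume a b := hqk.mul_continuousOn (hIcc ▸ hGcont)
    have hstep2 : (∫ t in a..b, ((w (k + 1) t * rkw a b x w p k t) * (Df k x / w (k + 1) x)
            + (w (k + 1) t * rkw a b x w p k t) * (∫ s in x..t, Df (k + 1) s)))
        = (∫ t in a..b, w (k + 1) t * rkw a b x w p k t) * (Df k x / w (k + 1) x)
          + ∫ t in a..b, (w (k + 1) t * rkw a b x w p k t) * (∫ s in x..t, Df (k + 1) s) := by
      rw [integral_add (hqk.mul_const _) hwqG, intervalIntegral.integral_mul_const]
    -- Step 3: Fubini on each side of x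
    have hP1 : (∫ t in a..x, (w (k + 1) t * rkw a b x w p k t) * (∫ s in x..t, Df (k + 1) s))
        = ∫ s in a..x, rkw a b x w p (k + 1) s * Df (k + 1) s := by
      have e1 : (∫ t in a..x, (w (k + 1) t * rkw a b x w p k t) * (∫ s in x..t, Df (k + 1) s))
          = ∫ t in a..x, -((w (k + 1) t * rkw a b x w p k t) * (∫ s in t..x, Df (k + 1) s)) := by
        apply integral_congr
        intro t _
        dsimp only
        rw [integral_symm t x]
        ring
      rw [e1, intervalIntegral.integral_neg,
        triangle_fubini _ _ a x hax (hqk.mono_set hsubax) (hgint.mono_set hsubax),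
        ← intervalIntegral.integral_neg]
      apply integral_congr
      intro s hs
      dsimp only
      rw [Set.uIcc_of_le hax] at hs
      rw [rkw_succ_apply, if_pos hs.2]
      ring
    have hP2 : (∫ t in x..b, (w (k + 1) t * rkw a b x w p k t) * (∫ s in x..t, Df (k + 1) s))
        = ∫ s in x..b, rkw a b x w p (k + 1) s * Df (k + 1) s := by
      have tri := triangle_fubini (Df (k + 1)) (fun t => w (k + 1) t * rkw a b x w p k t)
        x b hxb (hgint.mono_set hsubxb) (hqk.mono_set hsubxb)
      have e2 : (∫ t in x..b, (w (k + 1) t * rkw a b x w p k t) * (∫ s in x..t, Df (k + 1) s))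
          = ∫ s in x..b, (∫ t in x..s, Df (k + 1) t) * (w (k + 1) s * rkw a b x w p k s) := by
        apply integral_congr
        intro t _
        dsimp only
        ring
      rw [e2, ← tri]
      apply intervalIntegral.integral_congr_ae
      filter_upwards with s hs
      rw [Set.uIoc_of_le hxb] at hs
      rw [rkw_succ_apply, if_neg (not_le.mpr hs.1)]
      ring
    -- integrability of r^{k+1} * Df^{k+1} on each side
    have h1 : IntervalIntegrable
        (fun s => rkw a b x w p (k + 1) s * Df (k + 1) s) volume a x := by
      have hcont : ContinuousOn
          (fun s => -(∫ t in a..s, w (k + 1) t * rkw a b x w p k t)) (Set.uIcc a x) :=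
        (hPc.mono (hIcc ▸ hsubax)).neg
      apply ((hgint.mono_set hsubax).continuousOn_mul hcont).congr_ae
      filter_upwards [ae_restrict_mem measurableSet_uIoc] with s hs
      rw [Set.uIoc_of_le hax] at hs
      rw [rkw_succ_apply, if_pos hs.2]
    have h2 : IntervalIntegrable
        (fun s => rkw a b x w p (k + 1) s * Df (k + 1) s) volume x b := by
      have hcont : ContinuousOn
          (fun s => (∫ t in a..b, w (k + 1) t * rkw a b x w p k t)
            - ∫ t in a..s, w (k + 1) t * rkw a b x w p k t) (Set.uIcc x b) :=
        continuousOn_const.sub (hPc.mono (hIcc ▸ hsubxb))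
      apply ((hgint.mono_set hsubxb).continuousOn_mul hcont).congr_ae
      filter_upwards [ae_restrict_mem measurableSet_uIoc] with s hs
      rw [Set.uIoc_of_le hxb] at hs
      rw [rkw_succ_apply, if_neg (not_le.mpr hs.1)]
      rw [integral_interval_sub_left hqk
        (hqk.mono_set (hsubas s ⟨hax.trans hs.1.le, hs.2⟩))]
    have hsplitL : IntervalIntegrable
        (fun t => (w (k + 1) t * rkw a b x w p k t) * (∫ s in x..t, Df (k + 1) s))
        volume a x := hwqG.mono_set hsubax
    have hsplitR : IntervalIntegrable
        (fun t => (w (k + 1) t * rkw a b x w p k t) * (∫ s in x..t, Df (k + 1) s))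
        volume x b := hwqG.mono_set hsubxb
    rw [hstep1, hstep2, ← integral_add_adjacent_intervals hsplitL hsplitR, hP1, hP2,
      integral_add_adjacent_intervals h1 h2]
  -- main induction
  have main : ∀ m, m ≤ n →
      (∫ t in a..b, p t * f t)
        - ∑ k ∈ Finset.range m,
            (∫ t in a..b, rkw a b x w p k t * w (k + 1) t) * (Df k x / w (k + 1) x)
      = ∫ t in a..b, rkw a b x w p m t * Df m t := by
    intro m
    induction m with
    | zero => intro _; simp [rkw, hD0]
    | succ m ih =>
      intro hm
      have hmn : m < n := hm
      have e := key m hmn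
      have ih' := ih hmn.le
      have ecoef : (∫ t in a..b, rkw a b x w p m t * w (m + 1) t) * (Df m x / w (m + 1) x)
          = (∫ t in a..b, w (m + 1) t * rkw a b x w p m t) * (Df m x / w (m + 1) x) := by
        rw [integral_congr (g := fun t => w (m + 1) t * rkw a b x w p m t)
          (fun t _ => mul_comm _ _)]
      rw [Finset.sum_range_succ]
      linarith
  exact main n le_rfl
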